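/- (Hölder) A finite group E is isomorphic to a crossed product of a cyclic group of order n by a cyclic group of order m (equivalently, E has a normal subgroup N isomorphic to ZMod n such that the quotient E/N is isomorphic to ZMod m) if and only if there exist integers i, j with 0 ≤ i < n and 0 ≤ j < n such that n divides i·(j−1), n divides j^m − 1, and E is isomorphic to the presented group on two generators a, b with relators a^n, b^m·a^(−i), and b^(−1)·a·b·a^(−j). -/

import Mathlib

open Subgroup Multiplicative

namespace HolderAux

variable {G : Type*} [Group G]

lemma conj_zpow'' (g x : G) (s : ℤ) : g * x ^ s * g⁻¹ = (g * x * g⁻¹) ^ s := by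
  rw [← MulAut.conj_apply, map_zpow, MulAut.conj_apply]

variable {a b : G} {n m : ℕ} {i j : ℤ}

lemma conj_b (hconj : b⁻¹ * a * b = a ^ j) (s : ℤ) : b⁻¹ * a ^ s * b = a ^ (j * s) := by
  have := conj_zpow'' b⁻¹ a s
  rw [inv_inv] at this
  rw [this, hconj, ← zpow_mul]

lemma conj_bpow (hconj : b⁻¹ * a * b = a ^ j) :
    ∀ (t : ℕ) (s : ℤ), (b ^ t)⁻¹ * a ^ s * b ^ t = a ^ (j ^ t * s) := by
  intro t
  induction t with
  | zero => intro s; simp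
  | succ t ih =>
    intro s
    have h1 : (b ^ (t+1))⁻¹ * a ^ s * b ^ (t+1) = b⁻¹ * ((b ^ t)⁻¹ * a ^ s * b ^ t) * b := by
      rw [pow_succ]; group
    rw [h1, ih s, conj_b hconj]
    congr 1
    rw [pow_succ]
    ring

lemma bab (hm : 1 ≤ m) (hb : b ^ m = a ^ i) (hconj : b⁻¹ * a * b = a ^ j) :
    b * a * b⁻¹ = a ^ (j ^ (m - 1)) := by
  obtain ⟨k, rfl⟩ : ∃ k, m = k + 1 := ⟨m - 1, by omega⟩
  have h1 : b * a * b⁻¹ = b ^ (k+1) * ((b ^ k)⁻¹ * a * b ^ k) * (b ^ (k+1))⁻¹ := by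
    rw [pow_succ]; group
  have h2 := conj_bpow hconj k 1
  rw [zpow_one] at h2
  rw [h1, h2, hb]
  have hcomm : Commute (a ^ i) (a ^ (j ^ k * 1)) := (Commute.refl a).zpow_zpow _ _
  rw [hcomm.eq]
  simp [mul_assoc]

lemma zpowers_normal (hm : 1 ≤ m) (hb : b ^ m = a ^ i) (hconj : b⁻¹ * a * b = a ^ j)
    (hgen : closure {a, b} = ⊤) : (zpowers a).Normal := by
  rw [← Subgroup.normalizer_eq_top_iff, eq_top_iff, ← hgen, closure_le]
  rintro x (rfl | rfl)
  · exact le_normalizer (mem_zpowers x)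
  · rw [SetLike.mem_coe, mem_normalizer_iff]
    intro h
    constructor
    · intro hh
      obtain ⟨s, rfl⟩ := mem_zpowers_iff.1 hh
      rw [mem_zpowers_iff]
      refine ⟨j ^ (m-1) * s, ?_⟩
      have := conj_zpow'' x a s
      rw [this, bab hm hb hconj, ← zpow_mul]
    · intro hh
      obtain ⟨s, hs⟩ := mem_zpowers_iff.1 hh
      have : h = x⁻¹ * a ^ s * x := by
        rw [hs]; group
      rw [this, conj_b hconj, mem_zpowers_iff]
      exact ⟨j * s, rfl⟩

lemma finite_and_card_le (hn : 1 ≤ n) (hm : 1 ≤ m) (ha : a ^ n = 1) (hb : b ^ m = a ^ i)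
    (hconj : b⁻¹ * a * b = a ^ j) (hgen : closure {a, b} = ⊤) :
    Finite G ∧ Nat.card G ≤ n * m := by
  have hord : IsOfFinOrder a := isOfFinOrder_iff_pow_eq_one.2 ⟨n, hn, ha⟩
  haveI hA : (zpowers a).Normal := zpowers_normal hm hb hconj hgen
  haveI : Finite (zpowers a) := hord.finite_zpowers.to_subtype
  have hcardA : Nat.card (zpowers a) ≤ n :=
    Nat.card_zpowers a ▸ Nat.le_of_dvd hn (orderOf_dvd_of_pow_eq_one ha)
  set bq : G ⧸ zpowers a := QuotientGroup.mk b with hbq_def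
  have hbq : bq ^ m = 1 := by
    rw [hbq_def, ← QuotientGroup.mk_pow, hb, QuotientGroup.eq_one_iff]
    exact mem_zpowers_iff.2 ⟨i, rfl⟩
  have hordb : IsOfFinOrder bq := isOfFinOrder_iff_pow_eq_one.2 ⟨m, hm, hbq⟩
  have htop : ∀ x : G ⧸ zpowers a, x ∈ zpowers bq := by
    intro x
    obtain ⟨g, rfl⟩ := QuotientGroup.mk_surjective x
    have hg : g ∈ closure ({a, b} : Set G) := hgen ▸ mem_top g
    refine Subgroup.closure_induction (fun y hy => ?_) ?_
      (fun y z _ _ hy hz => ?_) (fun y _ hy => ?_) hg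
    · rcases hy with h | h
      · subst h
        have : (QuotientGroup.mk y : G ⧸ zpowers y) = 1 :=
          (QuotientGroup.eq_one_iff y).2 (mem_zpowers y)
        rw [this]; exact one_mem _
      · subst h
        exact mem_zpowers _
    · exact one_mem _
    · rw [QuotientGroup.mk_mul]; exact mul_mem hy hz
    · rw [QuotientGroup.mk_inv]; exact inv_mem hy
  haveI : Finite (zpowers bq) := hordb.finite_zpowers.to_subtype
  have hsurj : Function.Surjective (fun x : zpowers bq => (x : G ⧸ zpowers a)) :=
    fun x => ⟨⟨x, htop x⟩, rfl⟩
  haveI hfinq : Finite (G ⧸ zpowers a) := Finite.of_surjective _ hsurj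
  haveI hfin : Finite G := Finite.of_equiv _ (groupEquivQuotientProdSubgroup (s := zpowers a)).symm
  refine ⟨hfin, ?_⟩
  have hq : Nat.card (G ⧸ zpowers a) ≤ m := by
    have h1 : Nat.card (G ⧸ zpowers a) ≤ Nat.card (zpowers bq) :=
      Nat.card_le_card_of_surjective _ hsurj
    have h2 : Nat.card (zpowers bq) ≤ m :=
      Nat.card_zpowers bq ▸ Nat.le_of_dvd hm (orderOf_dvd_of_pow_eq_one hbq)
    omega
  calc Nat.card G = Nat.card (G ⧸ zpowers a) * Nat.card (zpowers a) :=
        Subgroup.card_eq_card_quotient_mul_card_subgroup _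
    _ ≤ m * n := Nat.mul_le_mul hq hcardA
    _ = n * m := Nat.mul_comm m n


/-- Left multiplication by a unit, as a `MulAut` of the multiplicative type tag. -/
def mulAutML (R : Type*) [Semiring R] : Rˣ →* MulAut (Multiplicative R) where
  toFun v := AddEquiv.toMultiplicative (AddAut.mulLeft v)
  map_one' := by ext x; simp [AddEquiv.toMultiplicative]; rfl
  map_mul' v w := by ext x; simp [AddEquiv.toMultiplicative]; rfl

lemma mulAutML_apply {R : Type*} [Semiring R] (v : Rˣ) (x : R) :
    mulAutML R v (ofAdd x) = ofAdd ((v : R) * x) := rfl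

lemma model_exists (n m : ℕ) (hn : 1 ≤ n) (hm : 1 ≤ m) (i j : ℤ)
    (h1 : (n : ℤ) ∣ i * (j - 1)) (h2 : (n : ℤ) ∣ j ^ m - 1) :
    ∃ (Q : Type) (_ : Group Q) (aq bq : Q),
      aq ^ n = 1 ∧ bq ^ m = aq ^ i ∧ bq⁻¹ * aq * bq = aq ^ j ∧
      closure {aq, bq} = ⊤ ∧ Nat.card Q = n * m ∧
      ∃ (NQ : Subgroup Q) (hNQ : NQ.Normal),
        Nonempty (NQ ≃* Multiplicative (ZMod n)) ∧
        (haveI := hNQ; Nonempty (Q ⧸ NQ ≃* Multiplicative (ZMod m))) := by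
  haveI : NeZero n := ⟨by omega⟩
  haveI : NeZero m := ⟨by omega⟩
  -- `j` is a unit of `ZMod n`
  have hj : ((j : ZMod n)) ^ m = 1 := by
    have h := (ZMod.intCast_zmod_eq_zero_iff_dvd (j ^ m - 1) n).2 h2
    push_cast at h
    exact sub_eq_zero.mp h
  have hunit : IsUnit ((j : ZMod n)) := by
    refine IsUnit.of_mul_eq_one ((j : ZMod n) ^ (m - 1)) ?_
    rw [← pow_succ', Nat.sub_add_cancel hm, hj]
  set u := hunit.unit with hu_def
  have hu : (u : ZMod n) = (j : ZMod n) := hunit.unit_spec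
  have hum : u ^ m = 1 := by
    ext
    push_cast [hu]
    exact hj
  have humz : ((u ^ (-(m : ℤ)) : (ZMod n)ˣ) : ZMod n) = 1 := by
    rw [zpow_neg, zpow_natCast, hum, inv_one, Units.val_one]
  have hiu : (i : ZMod n) * (j : ZMod n) = (i : ZMod n) := by
    have h := (ZMod.intCast_zmod_eq_zero_iff_dvd (i * (j - 1)) n).2 h1
    push_cast at h
    have h' : (i : ZMod n) * (j : ZMod n) - (i : ZMod n) = 0 := by linear_combination h
    exact sub_eq_zero.mp h'
  have hiuinv : (i : ZMod n) * ((u⁻¹ : (ZMod n)ˣ) : ZMod n) = (i : ZMod n) := by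
    calc (i : ZMod n) * ((u⁻¹ : (ZMod n)ˣ) : ZMod n)
        = ((i : ZMod n) * (u : ZMod n)) * ((u⁻¹ : (ZMod n)ˣ) : ZMod n) := by rw [hu, hiu]
      _ = (i : ZMod n) * ((u : ZMod n) * ((u⁻¹ : (ZMod n)ˣ) : ZMod n)) := by ring
      _ = (i : ZMod n) := by rw [u.mul_inv, mul_one]
  have hiu_z : ∀ t : ℤ, (i : ZMod n) * ((u ^ t : (ZMod n)ˣ) : ZMod n) = (i : ZMod n) := by
    intro t
    induction t using Int.induction_on with
    | zero => simp
    | succ k ih => rw [zpow_add_one, Units.val_mul, ← mul_assoc, ih, hu, hiu]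
    | pred k ih => rw [sub_eq_add_neg, zpow_add, Units.val_mul, ← mul_assoc, ih, zpow_neg_one, hiuinv]
  -- the semidirect product `G₀`
  let φ : Multiplicative ℤ →* MulAut (Multiplicative (ZMod n)) :=
    (mulAutML (ZMod n)).comp (zpowersHom (ZMod n)ˣ u⁻¹)
  let G₀ := Multiplicative (ZMod n) ⋊[φ] Multiplicative ℤ
  let A : ZMod n → G₀ := fun x => SemidirectProduct.inl (ofAdd x)
  let B : ℤ → G₀ := fun k => SemidirectProduct.inr (ofAdd k)
  have hAmul : ∀ x y, A x * A y = A (x + y) := by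
    intro x y
    show SemidirectProduct.inl (ofAdd x) * SemidirectProduct.inl (ofAdd y) = _
    rw [← map_mul, ← ofAdd_add]
  have hAzpow : ∀ (x : ZMod n) (s : ℤ), (A x) ^ s = A ((s : ZMod n) * x) := by
    intro x s
    show (SemidirectProduct.inl (ofAdd x)) ^ s = SemidirectProduct.inl (ofAdd ((s : ZMod n) * x))
    have h : (ofAdd x) ^ s = ofAdd ((s : ZMod n) * x) := by
      rw [← zsmul_eq_mul, ofAdd_zsmul]
    rw [← map_zpow, h]
  have hBzpow : ∀ (k s : ℤ), (B k) ^ s = B (s * k) := by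
    intro k s
    show (SemidirectProduct.inr (ofAdd k)) ^ s = SemidirectProduct.inr (ofAdd (s * k))
    have h : (ofAdd k) ^ s = ofAdd (s * k) := by
      rw [← ofAdd_zsmul]
      norm_num [zsmul_eq_mul]
    rw [← map_zpow, h]
  have hBmul : ∀ k l, B k * B l = B (k + l) := by
    intro k l
    show SemidirectProduct.inr (ofAdd k) * SemidirectProduct.inr (ofAdd l) = _
    rw [← map_mul, ← ofAdd_add]
  have hB0 : B 0 = 1 := by
    show SemidirectProduct.inr (ofAdd (0 : ℤ)) = 1
    rw [ofAdd_zero, map_one]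
  have hA0 : A 0 = 1 := by
    show SemidirectProduct.inl (ofAdd (0 : ZMod n)) = 1
    rw [ofAdd_zero, map_one]
  have hswap : ∀ (k : ℤ) (x : ZMod n),
      B k * A x = A (((u ^ (-k) : (ZMod n)ˣ) : ZMod n) * x) * B k := by
    intro k x
    have h0 : φ (ofAdd k) (ofAdd x) = ofAdd (((u ^ (-k) : (ZMod n)ˣ) : ZMod n) * x) := by
      show mulAutML (ZMod n) (u⁻¹ ^ k) (ofAdd x) = _
      rw [mulAutML_apply, inv_zpow, ← zpow_neg]
    have h1 := SemidirectProduct.inl_aut (φ := φ) (ofAdd k) (ofAdd x)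
    rw [h0, map_inv] at h1
    show SemidirectProduct.inr (ofAdd k) * SemidirectProduct.inl (ofAdd x)
        = SemidirectProduct.inl (ofAdd (((u ^ (-k) : (ZMod n)ˣ) : ZMod n) * x))
          * SemidirectProduct.inr (ofAdd k)
    rw [h1]
    group
  have hg_decomp : ∀ g : G₀, A (toAdd g.left) * B (toAdd g.right) = g := by
    intro g
    show SemidirectProduct.inl (ofAdd (toAdd g.left))
        * SemidirectProduct.inr (ofAdd (toAdd g.right)) = g
    rw [ofAdd_toAdd, ofAdd_toAdd, SemidirectProduct.inl_left_mul_inr_right]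
  -- generators
  set aG : G₀ := A 1 with haG_def
  set bG : G₀ := B 1 with hbG_def
  have haG_zpow : ∀ s : ℤ, aG ^ s = A ((s : ZMod n)) := by
    intro s; rw [haG_def, hAzpow, mul_one]
  have haG_pow : aG ^ n = 1 := by
    have h := haG_zpow (n : ℤ)
    rw [zpow_natCast] at h
    rw [h, Int.cast_natCast, ZMod.natCast_self, hA0]
  have hbG_zpow : ∀ s : ℤ, bG ^ s = B s := by
    intro s; rw [hbG_def, hBzpow, mul_one]
  have hbG_pow : bG ^ m = B (m : ℤ) := by
    have h := hbG_zpow (m : ℤ); rwa [zpow_natCast] at h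
  -- relation 3
  have hrel3 : bG⁻¹ * aG * bG = aG ^ j := by
    have h1 : bG⁻¹ = B (-1) := by
      have h := hbG_zpow (-1); rwa [zpow_neg_one] at h
    rw [haG_zpow j, h1]
    conv_lhs => rw [haG_def, hbG_def]
    rw [hswap (-1) 1, neg_neg, zpow_one, mul_one, hu, mul_assoc, hBmul]
    norm_num [hB0]
  -- the central element
  set ci : ZMod n := ((-i : ℤ) : ZMod n) with hci_def
  have hci : ci = -((i : ℤ) : ZMod n) := by rw [hci_def]; push_cast; ring
  have hciu : ∀ t : ℤ, ((u ^ t : (ZMod n)ˣ) : ZMod n) * ci = ci := by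
    intro t
    rw [hci, mul_neg, mul_comm (((u ^ t : (ZMod n)ˣ) : ZMod n)) _, hiu_z]
  set cG : G₀ := A ci * B (m : ℤ) with hcG_def
  have hc : bG ^ m * aG ^ (-i) = cG := by
    rw [hbG_pow, haG_zpow (-i), hswap (m : ℤ), humz, one_mul, hcG_def, hci_def]
  -- generation of G₀
  have hGgen : closure ({aG, bG} : Set G₀) = ⊤ := by
    rw [eq_top_iff]
    rintro g -
    rw [← hg_decomp g]
    refine mul_mem ?_ ?_
    · have h : A (toAdd g.left) = aG ^ (((toAdd g.left).val : ℤ)) := by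
        rw [haG_zpow]
        congr 1
        rw [Int.cast_natCast, ZMod.natCast_val, ZMod.cast_id]
      rw [h]
      exact zpow_mem (subset_closure (by simp)) _
    · rw [← hbG_zpow]
      exact zpow_mem (subset_closure (by simp)) _
  -- `cG` is central
  have hca : cG * aG = aG * cG := by
    have h₁ : cG * aG = A (ci + 1) * B (m : ℤ) := by
      calc (A ci * B (m : ℤ)) * A 1 = A ci * (B (m : ℤ) * A 1) := by rw [mul_assoc]
        _ = A ci * (A (((u ^ (-(m : ℤ)) : (ZMod n)ˣ) : ZMod n) * 1) * B (m : ℤ)) := by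
            rw [hswap]
        _ = A ci * (A 1 * B (m : ℤ)) := by rw [humz, one_mul]
        _ = (A ci * A 1) * B (m : ℤ) := by rw [mul_assoc]
        _ = A (ci + 1) * B (m : ℤ) := by rw [hAmul]
    have h₂ : aG * cG = A (1 + ci) * B (m : ℤ) := by
      rw [haG_def, hcG_def, ← mul_assoc, hAmul]
    rw [h₁, h₂, add_comm]
  have hcb : cG * bG = bG * cG := by
    have h₁ : cG * bG = A ci * B ((m : ℤ) + 1) := by
      rw [hcG_def, hbG_def, mul_assoc, hBmul]
    have h₂ : bG * cG = A ci * B (1 + (m : ℤ)) := by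
      calc bG * cG = (B 1 * A ci) * B (m : ℤ) := by rw [hbG_def, hcG_def, mul_assoc]
        _ = (A (((u ^ (-1 : ℤ) : (ZMod n)ˣ) : ZMod n) * ci) * B 1) * B (m : ℤ) := by rw [hswap]
        _ = (A ci * B 1) * B (m : ℤ) := by rw [hciu]
        _ = A ci * B (1 + (m : ℤ)) := by rw [mul_assoc, hBmul]
    rw [h₁, h₂, add_comm]
  have hcent : ∀ g : G₀, g * cG = cG * g := by
    have hsub : (⊤ : Subgroup G₀) ≤ Subgroup.centralizer {cG} := by
      rw [← hGgen, closure_le]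
      rintro y (h | h)
      · subst h
        rw [SetLike.mem_coe, Subgroup.mem_centralizer_iff]
        rintro z rfl
        exact hca
      · subst h
        rw [SetLike.mem_coe, Subgroup.mem_centralizer_iff]
        rintro z rfl
        exact hcb
    intro g
    have h := hsub (mem_top g)
    rw [Subgroup.mem_centralizer_iff] at h
    exact (h cG rfl).symm
  -- the quotient
  haveI hZnormal : (zpowers cG).Normal := by
    constructor
    intro z hz g
    obtain ⟨l, rfl⟩ := mem_zpowers_iff.1 hz
    have hcomm : Commute g cG := hcent g
    have h : g * cG ^ l * g⁻¹ = cG ^ l := by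
      rw [(hcomm.zpow_right l).eq]
      exact mul_inv_cancel_right _ _
    rw [mem_zpowers_iff]
    exact ⟨l, h.symm⟩
  -- the quotient group Q
  set Z := zpowers cG with hZ_def
  let π : G₀ →* G₀ ⧸ Z := QuotientGroup.mk' Z
  have hπ_surj : Function.Surjective π := QuotientGroup.mk'_surjective Z
  have hπ_one : ∀ g : G₀, π g = 1 ↔ g ∈ Z := by
    intro g; rw [← MonoidHom.mem_ker, QuotientGroup.ker_mk']
  set aQ := π aG with haQ_def
  set bQ := π bG with hbQ_def
  have hrelQ1 : aQ ^ n = 1 := by rw [haQ_def, ← map_pow, haG_pow, map_one]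
  have hrelQ3 : bQ⁻¹ * aQ * bQ = aQ ^ j := by
    rw [haQ_def, hbQ_def, ← map_zpow, ← map_inv, ← map_mul, ← map_mul, hrel3]
  have hrelQ2 : bQ ^ m = aQ ^ i := by
    have h : bG ^ m = cG * aG ^ i := by
      rw [← hc]; group
    rw [haQ_def, hbQ_def, ← map_pow, h, map_mul,
      (hπ_one cG).2 (mem_zpowers cG), one_mul, map_zpow]
  have cG_zpow : ∀ l : ℤ, cG ^ l = A ((l : ZMod n) * ci) * B (l * m) := by
    have hcomm : Commute (A ci) (B (m : ℤ)) := by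
      show A ci * B (m : ℤ) = B (m : ℤ) * A ci
      rw [hswap (m : ℤ) ci, hciu]
    intro l
    rw [hcG_def, hcomm.mul_zpow, hAzpow, hBzpow]
  have hrA : ∀ x : ZMod n, SemidirectProduct.rightHom (A x) = 1 :=
    fun x => SemidirectProduct.rightHom_inl _
  have hrAB : ∀ (x : ZMod n) (t : ℤ),
      SemidirectProduct.rightHom (A x * B t) = ofAdd t := by
    intro x t
    show SemidirectProduct.rightHom
      (SemidirectProduct.inl (ofAdd x) * SemidirectProduct.inr (ofAdd t)) = ofAdd t
    rw [map_mul, SemidirectProduct.rightHom_inl, SemidirectProduct.rightHom_inr, one_mul]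
  have haQ_zpow_one : ∀ k : ℤ, aQ ^ k = 1 ↔ (n : ℤ) ∣ k := by
    intro k
    rw [haQ_def, ← map_zpow, hπ_one]
    constructor
    · intro hk
      obtain ⟨l, hl⟩ := mem_zpowers_iff.1 hk
      have hr := congrArg SemidirectProduct.rightHom hl
      rw [cG_zpow, haG_zpow, hrAB, hrA] at hr
      have hl0 : l * (m : ℤ) = 0 := by
        have := ofAdd_eq_one.1 hr
        exact this
      have hl0' : l = 0 := by
        rcases mul_eq_zero.1 hl0 with h' | h'
        · exact h'
        · omega
      rw [hl0'] at hl
      rw [haG_zpow] at hl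
      have hleft := congrArg SemidirectProduct.left hl.symm
      have : ofAdd ((k : ZMod n)) = 1 := by
        rw [zpow_zero] at hleft
        calc ofAdd ((k : ZMod n))
            = (SemidirectProduct.inl (φ := φ) (ofAdd ((k : ZMod n)))).left := rfl
          _ = (1 : G₀).left := hleft
          _ = 1 := rfl
      have hzero : (k : ZMod n) = 0 := ofAdd_eq_one.1 this
      exact (ZMod.intCast_zmod_eq_zero_iff_dvd k n).1 hzero
    · rintro ⟨d, rfl⟩
      have : aG ^ ((n : ℤ) * d) = 1 := by
        rw [zpow_mul, zpow_natCast, haG_pow, one_zpow]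
      rw [this]
      exact one_mem Z
  have horder : orderOf aQ = n := by
    have hd1 : orderOf aQ ∣ n := orderOf_dvd_of_pow_eq_one hrelQ1
    have hd2 : (n : ℤ) ∣ (orderOf aQ : ℤ) := by
      rw [← haQ_zpow_one, zpow_natCast, pow_orderOf_eq_one]
    exact Nat.dvd_antisymm hd1 (Int.ofNat_dvd.mp hd2)
  -- the projection to `ZMod m`
  let ψ : G₀ →* Multiplicative (ZMod m) :=
    (AddMonoidHom.toMultiplicative (Int.castAddHom (ZMod m))).comp SemidirectProduct.rightHom
  have hψA : ∀ x : ZMod n, ψ (A x) = 1 := by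
    intro x
    show (AddMonoidHom.toMultiplicative (Int.castAddHom (ZMod m)))
      (SemidirectProduct.rightHom (SemidirectProduct.inl (ofAdd x))) = 1
    rw [SemidirectProduct.rightHom_inl, map_one]
  have hψB : ∀ t : ℤ, ψ (B t) = ofAdd ((t : ZMod m)) := by
    intro t
    show (AddMonoidHom.toMultiplicative (Int.castAddHom (ZMod m)))
      (SemidirectProduct.rightHom (SemidirectProduct.inr (ofAdd t))) = _
    rw [SemidirectProduct.rightHom_inr]
    rfl
  have hψZ : Z ≤ ψ.ker := by
    intro z hz
    obtain ⟨l, rfl⟩ := mem_zpowers_iff.1 hz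
    rw [MonoidHom.mem_ker, map_zpow]
    have hψc : ψ cG = 1 := by
      rw [hcG_def, map_mul, hψA, one_mul, hψB]
      have : ((m : ℤ) : ZMod m) = 0 := by push_cast [ZMod.natCast_self]; ring
      rw [this, ofAdd_zero]
    rw [hψc, one_zpow]
  let ρ : G₀ ⧸ Z →* Multiplicative (ZMod m) := QuotientGroup.lift Z ψ hψZ
  have hρπ : ∀ g : G₀, ρ (π g) = ψ g := fun g => rfl
  have hρ_surj : Function.Surjective ρ := by
    intro y
    refine ⟨π (B ((toAdd y).val : ℤ)), ?_⟩
    rw [hρπ, hψB, Int.cast_natCast, ZMod.natCast_val, ZMod.cast_id, ofAdd_toAdd]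
  have hdecomp : ∀ (g : G₀) (l : ℤ), toAdd g.right = m * l → π g ∈ zpowers aQ := by
    intro g l hl
    have hgg : g = aG ^ (i * l + ((toAdd g.left).val : ℤ)) * cG ^ l := by
      rw [haG_zpow, cG_zpow, ← mul_assoc, hAmul]
      conv_lhs => rw [← hg_decomp g]
      congr 1
      · congr 1
        rw [hci]
        push_cast [ZMod.natCast_val, ZMod.cast_id]
        ring
      · congr 1
        rw [hl]
        ring
    rw [hgg, map_mul, (hπ_one _).2 (zpow_mem (mem_zpowers cG) l), mul_one, map_zpow]
    exact zpow_mem (mem_zpowers aQ) _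
  have hψg : ∀ g : G₀, ψ g = ofAdd (((toAdd g.right : ℤ) : ZMod m)) := by
    intro g
    conv_lhs => rw [← hg_decomp g]
    rw [map_mul, hψA, one_mul, hψB]
  have hker : ρ.ker = zpowers aQ := by
    ext x
    constructor
    · intro hx
      obtain ⟨g, rfl⟩ := hπ_surj x
      rw [MonoidHom.mem_ker, hρπ, hψg] at hx
      have hdvd : (m : ℤ) ∣ toAdd g.right :=
        (ZMod.intCast_zmod_eq_zero_iff_dvd _ m).1 (ofAdd_eq_one.1 hx)
      obtain ⟨l, hl⟩ := hdvd
      exact hdecomp g l hl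
    · intro hx
      obtain ⟨s, hs⟩ := mem_zpowers_iff.1 hx
      rw [MonoidHom.mem_ker, ← hs, map_zpow, haQ_def, hρπ]
      have : ψ aG = 1 := hψA 1
      rw [this, one_zpow]
  -- cyclic subgroup iso
  haveI hcyc : IsCyclic ↥(zpowers aQ) := by
    refine ⟨⟨⟨aQ, mem_zpowers aQ⟩, ?_⟩⟩
    rintro ⟨x, hx⟩
    obtain ⟨s, hs⟩ := mem_zpowers_iff.1 hx
    exact mem_zpowers_iff.2 ⟨s, Subtype.ext (by rw [SubgroupClass.coe_zpow]; exact hs)⟩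
  have hcard_zp : Nat.card ↥(zpowers aQ) = n := by rw [Nat.card_zpowers, horder]
  have e1 : ↥(zpowers aQ) ≃* Multiplicative (ZMod n) := (hcard_zp ▸ (zmodCyclicMulEquiv hcyc)).symm
  have eN : ↥(ρ.ker) ≃* Multiplicative (ZMod n) := (MulEquiv.subgroupCongr hker).trans e1
  have eQm : ((G₀ ⧸ Z) ⧸ ρ.ker) ≃* Multiplicative (ZMod m) :=
    QuotientGroup.quotientKerEquivOfSurjective ρ hρ_surj
  have hcardQ : Nat.card (G₀ ⧸ Z) = n * m := by
    rw [Subgroup.card_eq_card_quotient_mul_card_subgroup ρ.ker]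
    have c1 : Nat.card ((G₀ ⧸ Z) ⧸ ρ.ker) = m := by
      rw [Nat.card_congr eQm.toEquiv, Nat.card_congr Multiplicative.toAdd, Nat.card_zmod]
    have c2 : Nat.card ↥(ρ.ker) = n := by
      rw [Nat.card_congr (MulEquiv.subgroupCongr hker).toEquiv, Nat.card_zpowers, horder]
    rw [c1, c2, Nat.mul_comm]
  have hQgen : closure ({aQ, bQ} : Set (G₀ ⧸ Z)) = ⊤ := by
    have himg : π '' {aG, bG} = {aQ, bQ} := Set.image_pair π aG bG
    rw [← himg, ← MonoidHom.map_closure, hGgen, ← MonoidHom.range_eq_map]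
    exact MonoidHom.range_eq_top.2 hπ_surj
  exact ⟨G₀ ⧸ Z, inferInstance, aQ, bQ, hrelQ1, hrelQ2, hrelQ3, hQgen, hcardQ,
    ρ.ker, inferInstance, ⟨eN⟩, ⟨eQm⟩⟩


def holderRels (n m : ℕ) (i j : ℤ) : Set (FreeGroup (Fin 2)) :=
  {FreeGroup.of 0 ^ n, FreeGroup.of 1 ^ m * FreeGroup.of 0 ^ (-i),
    (FreeGroup.of 1)⁻¹ * FreeGroup.of 0 * FreeGroup.of 1 * FreeGroup.of 0 ^ (-j)}

lemma presented_facts (n m : ℕ) (hn : 1 ≤ n) (hm : 1 ≤ m) (i j : ℤ) :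
    (PresentedGroup.of 0 : PresentedGroup (holderRels n m i j)) ^ n = 1 ∧
    (PresentedGroup.of 1 : PresentedGroup (holderRels n m i j)) ^ m = PresentedGroup.of 0 ^ i ∧
    (PresentedGroup.of 1 : PresentedGroup (holderRels n m i j))⁻¹ * PresentedGroup.of 0 *
      PresentedGroup.of 1 = PresentedGroup.of 0 ^ j ∧
    closure {(PresentedGroup.of 0 : PresentedGroup (holderRels n m i j)),
        PresentedGroup.of 1} = ⊤ ∧
    Finite (PresentedGroup (holderRels n m i j)) ∧
    Nat.card (PresentedGroup (holderRels n m i j)) ≤ n * m := by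
  have hmk : ∀ r ∈ holderRels n m i j, (PresentedGroup.mk (holderRels n m i j)) r = 1 :=
    fun r hr => (QuotientGroup.eq_one_iff r).2 (Subgroup.subset_normalClosure hr)
  have mem1 : FreeGroup.of 0 ^ n ∈ holderRels n m i j := Set.mem_insert _ _
  have mem2 : FreeGroup.of 1 ^ m * FreeGroup.of 0 ^ (-i) ∈ holderRels n m i j := by
    right; left; rfl
  have mem3 : (FreeGroup.of 1)⁻¹ * FreeGroup.of 0 * FreeGroup.of 1 * FreeGroup.of 0 ^ (-j)
      ∈ holderRels n m i j := by
    right; right; rfl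
  have h1 : (PresentedGroup.of 0 : PresentedGroup (holderRels n m i j)) ^ n = 1 := by
    have h := hmk _ mem1
    rw [map_pow] at h
    exact h
  have h2 : (PresentedGroup.of 1 : PresentedGroup (holderRels n m i j)) ^ m
      = PresentedGroup.of 0 ^ i := by
    have h := hmk _ mem2
    rw [map_mul, map_pow, map_zpow] at h
    have h' := mul_eq_one_iff_eq_inv.1 h
    rwa [zpow_neg, inv_inv] at h'
  have h3 : (PresentedGroup.of 1 : PresentedGroup (holderRels n m i j))⁻¹ * PresentedGroup.of 0 *
      PresentedGroup.of 1 = PresentedGroup.of 0 ^ j := by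
    have h := hmk _ mem3
    rw [map_mul, map_mul, map_mul, map_inv, map_zpow] at h
    have h' := mul_eq_one_iff_eq_inv.1 h
    rwa [zpow_neg, inv_inv] at h'
  have hrange : Set.range (PresentedGroup.of : Fin 2 → PresentedGroup (holderRels n m i j))
      = {PresentedGroup.of 0, PresentedGroup.of 1} := by
    ext y
    simp only [Set.mem_range, Set.mem_insert_iff, Set.mem_singleton_iff]
    constructor
    · rintro ⟨x, rfl⟩
      fin_cases x
      · exact Or.inl rfl
      · exact Or.inr rfl
    · rintro (rfl | rfl)
      exacts [⟨0, rfl⟩, ⟨1, rfl⟩]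
  have hgen : closure {(PresentedGroup.of 0 : PresentedGroup (holderRels n m i j)),
      PresentedGroup.of 1} = ⊤ := by
    rw [← hrange]
    exact PresentedGroup.closure_range_of _
  obtain ⟨hfin, hcard⟩ := finite_and_card_le hn hm h1 h2 h3 hgen
  exact ⟨h1, h2, h3, hgen, hfin, hcard⟩

end HolderAux

open HolderAux Subgroup Multiplicative in
/-- (Hölder) A finite group `E` is an extension of a cyclic group of order `n` by a cyclic
group of order `m` iff it has a presentation
`⟨a, b ∣ aⁿ, bᵐ a⁻ⁱ, b⁻¹ a b a⁻ʲ⟩` with `n ∣ i (j-1)` and `n ∣ jᵐ - 1`. -/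
theorem holder_crossed_product_of_finite_cyclic_groups
    (n m : ℕ) (hn : 1 ≤ n) (hm : 1 ≤ m) (E : Type*) [Group E] [Finite E] :
    (∃ N : Subgroup E, ∃ hN : N.Normal,
        Nonempty (N ≃* Multiplicative (ZMod n)) ∧
        (haveI := hN; Nonempty (E ⧸ N ≃* Multiplicative (ZMod m)))) ↔
      (∃ i j : ℤ, 0 ≤ i ∧ i < n ∧ 0 ≤ j ∧ j < n ∧
        (n : ℤ) ∣ i * (j - 1) ∧ (n : ℤ) ∣ j ^ m - 1 ∧
        Nonempty (E ≃* PresentedGroup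
          ({FreeGroup.of 0 ^ n,
            FreeGroup.of 1 ^ m * FreeGroup.of 0 ^ (-i),
            (FreeGroup.of 1)⁻¹ * FreeGroup.of 0 * FreeGroup.of 1 * FreeGroup.of 0 ^ (-j)} :
            Set (FreeGroup (Fin 2))))) := by
  haveI : NeZero n := ⟨by omega⟩
  haveI : NeZero m := ⟨by omega⟩
  have hnz : (0 : ℤ) < (n : ℤ) := by exact_mod_cast hn
  constructor
  · rintro ⟨N, hN, ⟨e₁⟩, ⟨e₂⟩⟩
    haveI := hN
    set π : E →* E ⧸ N := QuotientGroup.mk' N with hπ_def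
    -- the generator of N
    set aN : N := e₁.symm (ofAdd 1) with haN_def
    set a : E := (aN : E) with ha_def
    have horda : orderOf a = n := by
      have h1 : orderOf (ofAdd (1 : ZMod n)) = n := by
        rw [orderOf_ofAdd_eq_addOrderOf, ZMod.addOrderOf_one]
      have h2 : orderOf aN = n := by
        rw [haN_def]
        exact (orderOf_injective e₁.symm.toMonoidHom e₁.symm.injective
          (ofAdd (1 : ZMod n))).trans h1
      rw [ha_def]
      exact (orderOf_injective N.subtype N.subtype_injective aN).trans h2
    have han : a ^ n = 1 := by rw [← horda]; exact pow_orderOf_eq_one a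
    have hmemN : ∀ y : E, y ∈ N → ∃ s : ℤ, y = a ^ s := by
      intro y hy
      refine ⟨((toAdd (e₁ ⟨y, hy⟩)).val : ℤ), ?_⟩
      have hsub : (⟨y, hy⟩ : N) = aN ^ ((toAdd (e₁ ⟨y, hy⟩)).val : ℤ) := by
        apply e₁.injective
        rw [map_zpow, haN_def, e₁.apply_symm_apply]
        rw [← ofAdd_zsmul, zsmul_eq_mul, mul_one, Int.cast_natCast, ZMod.natCast_val,
          ZMod.cast_id, ofAdd_toAdd]
      calc y = ((⟨y, hy⟩ : N) : E) := rfl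
        _ = ((aN ^ ((toAdd (e₁ ⟨y, hy⟩)).val : ℤ) : N) : E) := by rw [← hsub]
        _ = a ^ ((toAdd (e₁ ⟨y, hy⟩)).val : ℤ) := by rw [SubgroupClass.coe_zpow, ha_def]
    -- the lift of the generator of E / N
    obtain ⟨b, hb⟩ := QuotientGroup.mk'_surjective N (e₂.symm (ofAdd (1 : ZMod m)))
    have hmkb : ∀ t : ℕ, π (b ^ t) = e₂.symm (ofAdd ((t : ZMod m))) := by
      intro t
      rw [map_pow, hb, ← map_pow, ← ofAdd_nsmul, nsmul_eq_mul, mul_one]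
    have hbmN : b ^ m ∈ N := by
      rw [← QuotientGroup.eq_one_iff]
      show π (b ^ m) = 1
      rw [hmkb m, ZMod.natCast_self, ofAdd_zero, map_one]
    obtain ⟨i₀, hbi⟩ := hmemN _ hbmN
    have haNmem : a ∈ N := aN.2
    have hconjN : b⁻¹ * a * b ∈ N := by
      have h := hN.conj_mem a haNmem b⁻¹
      rwa [inv_inv] at h
    obtain ⟨j₀, hbj⟩ := hmemN _ hconjN
    set i : ℤ := i₀ % (n : ℤ) with hi_def
    set j : ℤ := j₀ % (n : ℤ) with hj_def
    have hai : a ^ i = a ^ i₀ := by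
      rw [zpow_eq_zpow_iff_modEq, horda, hi_def]
      exact Int.emod_emod_of_dvd i₀ dvd_rfl
    have haj : a ^ j = a ^ j₀ := by
      rw [zpow_eq_zpow_iff_modEq, horda, hj_def]
      exact Int.emod_emod_of_dvd j₀ dvd_rfl
    have hbm' : b ^ m = a ^ i := by rw [hai, hbi]
    have hconj' : b⁻¹ * a * b = a ^ j := by rw [haj, hbj]
    -- the divisibility conditions
    have hdvd1 : (n : ℤ) ∣ i * (j - 1) := by
      have h := conj_b hconj' i
      rw [← hbm'] at h
      have h' : b⁻¹ * b ^ m * b = b ^ m := by group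
      rw [h'] at h
      have h'' : a ^ (j * i) = a ^ i := by rw [← h, hbm']
      have hmod := zpow_eq_zpow_iff_modEq.1 h''
      rw [horda] at hmod
      have hd := dvd_neg.2 hmod.dvd
      rw [neg_sub] at hd
      have heq : i * (j - 1) = j * i - i := by ring
      rw [heq]
      exact hd
    have hdvd2 : (n : ℤ) ∣ j ^ m - 1 := by
      have h := conj_bpow hconj' m 1
      rw [hbm'] at h
      have h' : (a ^ i)⁻¹ * a ^ (1 : ℤ) * a ^ i = a ^ (1 : ℤ) := by group
      rw [h', mul_one] at h
      have hmod := zpow_eq_zpow_iff_modEq.1 h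
      rw [horda] at hmod
      exact hmod.dvd
    -- generation
    have hgen : closure ({a, b} : Set E) = ⊤ := by
      rw [eq_top_iff]
      rintro x -
      set t : ℕ := (toAdd (e₂ (π x))).val with ht_def
      have hxbt : π (x * (b ^ t)⁻¹) = 1 := by
        rw [map_mul, map_inv, hmkb t, ht_def, ZMod.natCast_val, ZMod.cast_id, ofAdd_toAdd,
          e₂.symm_apply_apply, mul_inv_cancel]
      obtain ⟨s, hs⟩ := hmemN _ ((QuotientGroup.eq_one_iff _).1 hxbt)
      have hx : x = a ^ s * b ^ t := by
        have : x * (b ^ t)⁻¹ = a ^ s := hs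
        rw [← this]; group
      rw [hx]
      exact mul_mem (zpow_mem (subset_closure (by simp)) s)
        (pow_mem (subset_closure (by simp)) t)
    -- cardinality of E
    have hcardE : Nat.card E = n * m := by
      rw [Subgroup.card_eq_card_quotient_mul_card_subgroup N]
      have c1 : Nat.card (E ⧸ N) = m := by
        rw [Nat.card_congr e₂.toEquiv, Nat.card_congr Multiplicative.toAdd, Nat.card_zmod]
      have c2 : Nat.card N = n := by
        rw [Nat.card_congr e₁.toEquiv, Nat.card_congr Multiplicative.toAdd, Nat.card_zmod]
      rw [c1, c2, Nat.mul_comm]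
    -- the homomorphism from the presented group
    obtain ⟨hP1, hP2, hP3, hPgen, hPfin, hPcard⟩ := presented_facts n m hn hm i j
    have hf : ∀ r ∈ holderRels n m i j, FreeGroup.lift (![a, b]) r = 1 := by
      rintro r hr
      rcases hr with rfl | rfl | rfl
      · simp only [map_pow, FreeGroup.lift_apply_of, Matrix.cons_val_zero]
        exact han
      · simp only [map_mul, map_pow, map_zpow, FreeGroup.lift_apply_of, Matrix.cons_val_zero,
          Matrix.cons_val_one, Matrix.head_cons]
        rw [hbm']
        group
      · simp only [map_mul, map_inv, map_zpow, FreeGroup.lift_apply_of, Matrix.cons_val_zero,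
          Matrix.cons_val_one, Matrix.head_cons]
        rw [hconj']
        group
    set θ : PresentedGroup (holderRels n m i j) →* E := PresentedGroup.toGroup hf with hθ_def
    have hθa : θ (PresentedGroup.of 0) = a := PresentedGroup.toGroup.of hf
    have hθb : θ (PresentedGroup.of 1) = b := PresentedGroup.toGroup.of hf
    have hθ_surj : Function.Surjective θ := by
      rw [← MonoidHom.range_eq_top, eq_top_iff, ← hgen, closure_le]
      rintro y (rfl | rfl)
      · exact ⟨PresentedGroup.of 0, hθa⟩
      · exact ⟨PresentedGroup.of 1, hθb⟩
    have hbij : Function.Bijective θ := by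
      haveI := hPfin
      rw [Nat.bijective_iff_surjective_and_card]
      refine ⟨hθ_surj, ?_⟩
      have hle : Nat.card E ≤ Nat.card (PresentedGroup (holderRels n m i j)) :=
        Nat.card_le_card_of_surjective θ hθ_surj
      omega
    exact ⟨i, j, Int.emod_nonneg i₀ (by omega), Int.emod_lt_of_pos i₀ hnz,
      Int.emod_nonneg j₀ (by omega), Int.emod_lt_of_pos j₀ hnz, hdvd1, hdvd2,
      ⟨(MulEquiv.ofBijective θ hbij).symm⟩⟩
  · rintro ⟨i, j, hi0, hi1, hj0, hj1, hdvd1, hdvd2, ⟨e⟩⟩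
    obtain ⟨Q, _, aq, bq, hq1, hq2, hq3, hqgen, hqcard, NQ, hNQ, ⟨eN⟩, ⟨eQm⟩⟩ :=
      model_exists n m hn hm i j hdvd1 hdvd2
    obtain ⟨hP1, hP2, hP3, hPgen, hPfin, hPcard⟩ := presented_facts n m hn hm i j
    have hf : ∀ r ∈ holderRels n m i j, FreeGroup.lift (![aq, bq]) r = 1 := by
      rintro r hr
      rcases hr with rfl | rfl | rfl
      · simp only [map_pow, FreeGroup.lift_apply_of, Matrix.cons_val_zero]
        exact hq1
      · simp only [map_mul, map_pow, map_zpow, FreeGroup.lift_apply_of, Matrix.cons_val_zero,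
          Matrix.cons_val_one, Matrix.head_cons]
        rw [hq2]
        group
      · simp only [map_mul, map_inv, map_zpow, FreeGroup.lift_apply_of, Matrix.cons_val_zero,
          Matrix.cons_val_one, Matrix.head_cons]
        rw [hq3]
        group
    set θ : PresentedGroup (holderRels n m i j) →* Q := PresentedGroup.toGroup hf with hθ_def
    have hθa : θ (PresentedGroup.of 0) = aq := PresentedGroup.toGroup.of hf
    have hθb : θ (PresentedGroup.of 1) = bq := PresentedGroup.toGroup.of hf
    have hθ_surj : Function.Surjective θ := by
      rw [← MonoidHom.range_eq_top, eq_top_iff, ← hqgen, closure_le]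
      rintro y (rfl | rfl)
      · exact ⟨PresentedGroup.of 0, hθa⟩
      · exact ⟨PresentedGroup.of 1, hθb⟩
    have hbij : Function.Bijective θ := by
      haveI := hPfin
      rw [Nat.bijective_iff_surjective_and_card]
      refine ⟨hθ_surj, ?_⟩
      have hle : Nat.card Q ≤ Nat.card (PresentedGroup (holderRels n m i j)) :=
        Nat.card_le_card_of_surjective θ hθ_surj
      omega
    have eP : PresentedGroup (holderRels n m i j) ≃* Q := MulEquiv.ofBijective θ hbij
    have μ : E ≃* Q := e.trans eP
    set N : Subgroup E := NQ.comap μ.toMonoidHom with hN_def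
    haveI hNnormal : N.Normal := hNQ.comap μ.toMonoidHom
    have hmap : N.map μ.toMonoidHom = NQ :=
      Subgroup.map_comap_eq_self_of_surjective μ.surjective NQ
    have isoN : N ≃* NQ := (μ.subgroupMap N).trans (MulEquiv.subgroupCongr hmap)
    haveI := hNQ
    have isoQuot : (E ⧸ N) ≃* (Q ⧸ NQ) := QuotientGroup.congr N NQ μ hmap
    exact ⟨N, hNnormal, ⟨isoN.trans eN⟩, ⟨isoQuot.trans eQm⟩⟩
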